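/- The normalized Carlitz polynomials satisfy the K-binomial identity: e_i(st) = Σ_{n=0}^{i} binom(i,n)_K · e_n(t) · (e_{i-n}(s))^{q^n} for all s, t in F_q[x], where e_i(s) = ∏_{deg m < i, m ∈ F_q[x]} (s - m) for i ≥ 1 and e_0(s) = s. -/

import Mathlib

open Polynomial Finset

/-- The Carlitz bracket `[i] = x^{q^i} - x` in `F_q[x]`. -/
noncomputable def carBr (Fq : Type) [Field Fq] [Fintype Fq] (q i : ℕ) : Polynomial Fq :=
  X ^ q ^ i - X

/-- The Carlitz factorial `D_0 = 1`, `D_i = [i]·D_{i-1}^q`. -/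
noncomputable def carD (Fq : Type) [Field Fq] [Fintype Fq] (q : ℕ) : ℕ → Polynomial Fq
  | 0 => 1
  | i + 1 => carBr Fq q (i + 1) * (carD Fq q i) ^ q

/-- The `K`-binomial coefficient `binom(k,m)_K = D_k/(D_m·D_{k-m}^{q^m})` in `F_q(x)`,
defined for integer `m` and extended by `0` outside the range `0 ≤ m ≤ k`. -/
noncomputable def binomK (Fq : Type) [Field Fq] [Fintype Fq] (q : ℕ) (k : ℕ) (m : ℤ) :
    RatFunc Fq :=
  if 0 ≤ m ∧ m ≤ (k : ℤ) then
    algebraMap (Polynomial Fq) (RatFunc Fq) (carD Fq q k) /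
      (algebraMap (Polynomial Fq) (RatFunc Fq) (carD Fq q m.toNat) *
        algebraMap (Polynomial Fq) (RatFunc Fq) (carD Fq q (k - m.toNat)) ^ q ^ m.toNat)
  else 0

/-- The (non-normalized) Carlitz polynomial `e_i(s) = ∏_{m ∈ F_q[x], deg m < i} (s - m)`,
the product over all `q^i` polynomials of degree `< i` (including `0`); `e_0(s) = s`. -/
noncomputable def carE (Fq : Type) [Field Fq] [Fintype Fq] (i : ℕ) (s : Polynomial Fq) :
    Polynomial Fq :=
  ∏ c : Fin i → Fq, (s - ∑ j : Fin i, Polynomial.C (c j) * X ^ (j : ℕ))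

set_option linter.unusedSectionVars false
set_option maxHeartbeats 1000000

namespace CarlitzAux

variable {Fq : Type} [Field Fq] [Fintype Fq]

/-- the parametrization of polynomials of degree `< i`. -/
noncomputable def phi (i : ℕ) (c : Fin i → Fq) : Polynomial Fq :=
  ∑ j : Fin i, Polynomial.C (c j) * X ^ (j : ℕ)

lemma carE_eq (i : ℕ) (s : Polynomial Fq) :
    carE Fq i s = ∏ c : Fin i → Fq, (s - phi i c) := rfl

lemma phi_add (i : ℕ) (c c' : Fin i → Fq) : phi i (c + c') = phi i c + phi i c' := by
  simp [phi, Finset.sum_add_distrib, map_add, add_mul]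

lemma phi_zero (i : ℕ) : phi i (0 : Fin i → Fq) = 0 := by simp [phi]

lemma phi_smul (i : ℕ) (a : Fq) (c : Fin i → Fq) :
    phi i (a • c) = C a * phi i c := by
  rw [phi, phi, Finset.mul_sum]
  refine Finset.sum_congr rfl fun j _ => ?_
  rw [Pi.smul_apply, smul_eq_mul, C_mul, mul_assoc]

lemma phi_coeff (i : ℕ) (c : Fin i → Fq) (j : Fin i) :
    (phi i c).coeff (j : ℕ) = c j := by
  classical
  rw [phi, Polynomial.finset_sum_coeff]
  rw [Finset.sum_eq_single j]
  · simp [coeff_C_mul, coeff_X_pow]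
  · intro b _ hb
    have : (j : ℕ) ≠ (b : ℕ) := fun h => hb (Fin.ext h.symm)
    simp [coeff_C_mul, coeff_X_pow, this]
  · simp

lemma phi_inj (i : ℕ) : Function.Injective (phi (Fq := Fq) i) := by
  intro c c' h
  funext j
  rw [← phi_coeff i c j, ← phi_coeff i c' j, h]

lemma card_fun_fin (i : ℕ) : Fintype.card (Fin i → Fq) = Fintype.card Fq ^ i := by
  classical
  rw [Fintype.card_fun, Fintype.card_fin]

/-- root counting workhorse -/
lemma poly_eq_zero (i : ℕ) (g : Polynomial (Polynomial Fq))
    (hdeg : g.natDegree < Fintype.card Fq ^ i)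
    (h : ∀ c : Fin i → Fq, g.eval (phi i c) = 0) : g = 0 := by
  classical
  refine Polynomial.eq_zero_of_natDegree_lt_card_of_eval_eq_zero g (phi_inj i) h ?_
  rwa [card_fun_fin]

/-- the generic Carlitz polynomial in `(Fq[x])[Y]`. -/
noncomputable def Fpoly (i : ℕ) : Polynomial (Polynomial Fq) :=
  ∏ c : Fin i → Fq, (X - C (phi i c))

lemma Fpoly_eval (i : ℕ) (s : Polynomial Fq) : (Fpoly (Fq := Fq) i).eval s = carE Fq i s := by
  rw [Fpoly, eval_prod, carE_eq]
  simp

lemma Fpoly_monic (i : ℕ) : (Fpoly (Fq := Fq) i).Monic :=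
  monic_prod_of_monic _ _ fun c _ => monic_X_sub_C (phi i c)

lemma Fpoly_natDegree (i : ℕ) : (Fpoly (Fq := Fq) i).natDegree = Fintype.card Fq ^ i := by
  classical
  rw [Fpoly, natDegree_prod _ _ (fun c _ => X_sub_C_ne_zero (phi i c))]
  simp [natDegree_X_sub_C, card_fun_fin]

end CarlitzAux

namespace CarlitzAux

variable {Fq : Type} [Field Fq] [Fintype Fq]

lemma carE_root (i : ℕ) (c : Fin i → Fq) : carE Fq i (phi i c) = 0 := by
  rw [carE_eq]
  exact Finset.prod_eq_zero (Finset.mem_univ c) (by simp)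

lemma carE_add_phi (i : ℕ) (c : Fin i → Fq) (s : Polynomial Fq) :
    carE Fq i (phi i c + s) = carE Fq i s := by
  classical
  rw [carE_eq, carE_eq]
  refine (Fintype.prod_equiv (Equiv.addLeft c) (fun c' => s - phi i c')
    (fun c' => phi i c + s - phi i c') fun x => ?_).symm
  show s - phi i x = phi i c + s - phi i (c + x)
  rw [phi_add]
  ring

lemma carE_zero (i : ℕ) : carE Fq i 0 = 0 := by
  rw [carE_eq]
  refine Finset.prod_eq_zero (Finset.mem_univ 0) ?_
  rw [phi_zero, sub_zero]

lemma natDegree_sub_sub_C_lt {p r : Polynomial (Polynomial Fq)} {N : ℕ} (hN : 0 < N)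
    (hp : p.Monic) (hr : r.Monic) (hpd : p.natDegree = N) (hrd : r.natDegree = N)
    (w : Polynomial Fq) : (p - r - C w).natDegree < N := by
  have h1 : (p - r).degree < (N : WithBot ℕ) := by
    have hd : p.degree = r.degree := by
      rw [Polynomial.degree_eq_natDegree hp.ne_zero,
        Polynomial.degree_eq_natDegree hr.ne_zero, hpd, hrd]
    have hl : p.leadingCoeff = r.leadingCoeff := by rw [hp.leadingCoeff, hr.leadingCoeff]
    have := Polynomial.degree_sub_lt hd hp.ne_zero hl
    rwa [Polynomial.degree_eq_natDegree hp.ne_zero, hpd] at this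
  have hq1 : (0 : WithBot ℕ) < (N : WithBot ℕ) := by exact_mod_cast hN
  have h2 : (p - r - C w).degree < (N : WithBot ℕ) :=
    lt_of_le_of_lt (degree_sub_le _ _) (max_lt h1 (lt_of_le_of_lt degree_C_le hq1))
  by_cases h0 : p - r - C w = 0
  · simpa [h0] using hN
  · exact (Polynomial.natDegree_lt_iff_degree_lt h0).2 h2

lemma carE_add (i : ℕ) (s u : Polynomial Fq) :
    carE Fq i (s + u) = carE Fq i s + carE Fq i u := by
  classical
  set g : Polynomial (Polynomial Fq) :=
    (Fpoly i).comp (X + C u) - Fpoly i - C (carE Fq i u) with hg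
  have hdeg : g.natDegree < Fintype.card Fq ^ i := by
    refine natDegree_sub_sub_C_lt (pow_pos Fintype.card_pos i)
      ((Fpoly_monic i).comp_X_add_C u) (Fpoly_monic i) ?_ (Fpoly_natDegree i) _
    rw [natDegree_comp]
    simp [Fpoly_natDegree]
  have hzero : g = 0 := by
    refine poly_eq_zero i g hdeg fun c => ?_
    rw [hg]
    simp only [eval_sub, eval_comp, eval_add, eval_X, eval_C, Fpoly_eval]
    rw [carE_add_phi, carE_root]
    ring
  have h := congrArg (Polynomial.eval s) hzero
  rw [hg] at h
  simp only [eval_sub, eval_comp, eval_add, eval_X, eval_C, Fpoly_eval, eval_zero] at h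
  rw [sub_sub, sub_eq_zero] at h
  exact h

lemma carE_C_mul (i : ℕ) (a : Fq) (s : Polynomial Fq) :
    carE Fq i (C a * s) = C a * carE Fq i s := by
  classical
  by_cases ha : a = 0
  · simp [ha, carE_zero]
  · let e : (Fin i → Fq) ≃ (Fin i → Fq) :=
      { toFun := fun c => a • c
        invFun := fun c => a⁻¹ • c
        left_inv := fun c => by
          funext j
          exact inv_mul_cancel_left₀ ha (c j)
        right_inv := fun c => by
          funext j
          exact mul_inv_cancel_left₀ ha (c j) }
    rw [carE_eq, carE_eq]
    have h2 : ∏ c : Fin i → Fq, (C a * (s - phi i c)) = ∏ c : Fin i → Fq, (C a * s - phi i c) :=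
      Fintype.prod_equiv e _ _ fun x => by
        have hex : e x = a • x := rfl
        rw [hex, phi_smul]; ring
    rw [← h2, Finset.prod_mul_distrib, Finset.prod_const, card_univ, card_fun_fin,
      ← C_pow, FiniteField.pow_card_pow]

lemma carE_neg (i : ℕ) (s : Polynomial Fq) : carE Fq i (-s) = - carE Fq i s := by
  have h := carE_add i s (-s)
  rw [add_neg_cancel, carE_zero] at h
  exact (neg_eq_of_add_eq_zero_right h.symm).symm

lemma carE_sub_C_mul (i : ℕ) (u v : Polynomial Fq) (a : Fq) :
    carE Fq i (u - C a * v) = carE Fq i u - C a * carE Fq i v := by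
  rw [sub_eq_add_neg, carE_add, ← mul_neg, carE_C_mul, carE_neg]
  ring

end CarlitzAux

namespace CarlitzAux

variable {Fq : Type} [Field Fq] [Fintype Fq]

lemma natDegree_sub_lt' {K : Type} [Field K] {p r : Polynomial K} {N : ℕ} (hN : 0 < N)
    (hp : p.Monic) (hr : r.Monic) (hpd : p.natDegree = N) (hrd : r.natDegree = N) :
    (p - r).natDegree < N := by
  have hd : p.degree = r.degree := by
    rw [Polynomial.degree_eq_natDegree hp.ne_zero,
      Polynomial.degree_eq_natDegree hr.ne_zero, hpd, hrd]
  have hl : p.leadingCoeff = r.leadingCoeff := by rw [hp.leadingCoeff, hr.leadingCoeff]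
  have h1 := Polynomial.degree_sub_lt hd hp.ne_zero hl
  rw [Polynomial.degree_eq_natDegree hp.ne_zero, hpd] at h1
  by_cases h0 : p - r = 0
  · simpa [h0] using hN
  · exact (Polynomial.natDegree_lt_iff_degree_lt h0).2 h1

lemma prod_X_sub_C_fq : ∏ a : Fq, (X - C a) = X ^ Fintype.card Fq - X := by
  classical
  have hmon : (∏ a : Fq, (X - C a)).Monic := monic_prod_of_monic _ _ fun a _ => monic_X_sub_C a
  have hnd : (∏ a : Fq, (X - C a)).natDegree = Fintype.card Fq := by
    rw [natDegree_prod _ _ fun a _ => X_sub_C_ne_zero a]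
    simp
  have hmon2 : (X ^ Fintype.card Fq - X : Polynomial Fq).Monic := by
    apply monic_X_pow_sub
    calc (X : Polynomial Fq).degree = 1 := degree_X
    _ < (Fintype.card Fq : WithBot ℕ) := by exact_mod_cast Fintype.one_lt_card
  have hnd2 : (X ^ Fintype.card Fq - X : Polynomial Fq).natDegree = Fintype.card Fq :=
    FiniteField.X_pow_card_sub_X_natDegree_eq Fq Fintype.one_lt_card
  have hz : ∏ a : Fq, (X - C a) - (X ^ Fintype.card Fq - X) = 0 := by
    refine Polynomial.eq_zero_of_natDegree_lt_card_of_eval_eq_zero _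
      (Function.injective_id (α := Fq)) (fun b => ?_) ?_
    · simp only [eval_sub, eval_prod, eval_pow, eval_X, eval_C, id]
      rw [Finset.prod_eq_zero (Finset.mem_univ b) (by simp), FiniteField.pow_card]
      ring
    · exact natDegree_sub_lt' Fintype.card_pos hmon hmon2 hnd hnd2
  exact sub_eq_zero.mp hz

lemma prod_sub_algebraMap {L : Type} [CommRing L] [Algebra Fq L] (w : L) :
    ∏ a : Fq, (w - algebraMap Fq L a) = w ^ Fintype.card Fq - w := by
  have h := congrArg (aeval (R := Fq) w) (prod_X_sub_C_fq (Fq := Fq))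
  simpa using h

lemma prod_linear (y z : Polynomial Fq) :
    ∏ a : Fq, (y - C a * z) =
      y ^ Fintype.card Fq - z ^ (Fintype.card Fq - 1) * y := by
  classical
  by_cases hz : z = 0
  · rw [hz]
    rw [zero_pow (by have := Fintype.one_lt_card (α := Fq); omega)]
    simp [Finset.prod_const, card_univ]
  · set K := RatFunc Fq
    have hinj : Function.Injective (algebraMap (Polynomial Fq) K) :=
      IsFractionRing.injective (Polynomial Fq) K
    apply hinj
    push_cast [map_prod, map_sub, map_mul, map_pow]
    set Y := algebraMap (Polynomial Fq) K y with hY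
    set Z := algebraMap (Polynomial Fq) K z with hZdef
    have hZ : Z ≠ 0 := by
      rw [hZdef]
      intro h
      exact hz (hinj (by rw [h, map_zero]))
    have hCa : ∀ a : Fq, algebraMap (Polynomial Fq) K (C a) = algebraMap Fq K a := by
      intro a
      rw [IsScalarTower.algebraMap_apply Fq (Polynomial Fq) K, Polynomial.algebraMap_eq]
    calc ∏ a : Fq, (Y - algebraMap (Polynomial Fq) K (C a) * Z)
        = ∏ a : Fq, (Z * (Y / Z - algebraMap Fq K a)) := by
          refine Finset.prod_congr rfl fun a _ => ?_
          rw [hCa a, mul_sub, mul_div_cancel₀ Y hZ]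
          ring
      _ = Z ^ Fintype.card Fq * ((Y / Z) ^ Fintype.card Fq - Y / Z) := by
          rw [Finset.prod_mul_distrib, Finset.prod_const, card_univ, prod_sub_algebraMap]
      _ = Y ^ Fintype.card Fq - Z ^ (Fintype.card Fq - 1) * Y := by
          have hq : Fintype.card Fq - 1 + 1 = Fintype.card Fq :=
            Nat.succ_pred_eq_of_pos Fintype.card_pos
          rw [mul_sub, div_pow, mul_div_cancel₀ _ (pow_ne_zero _ hZ)]
          congr 1
          rw [← hq, pow_succ]
          field_simp
          rw [Nat.add_sub_cancel]
          ring

lemma phi_succ (i : ℕ) (c : Fin (i + 1) → Fq) :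
    phi (i + 1) c = phi i (fun j => c j.castSucc) + C (c (Fin.last i)) * X ^ i := by
  rw [phi, Fin.sum_univ_castSucc, phi]
  simp [Fin.coe_castSucc, Fin.val_last]

lemma phi_cons_zero (i : ℕ) (c : Fin i → Fq) :
    phi (i + 1) (Fin.cons 0 c) = X * phi i c := by
  rw [phi, Fin.sum_univ_succ, phi, Finset.mul_sum]
  simp only [Fin.cons_zero, map_zero, zero_mul, pow_zero, mul_one, zero_add, Fin.cons_succ]
  refine Finset.sum_congr rfl fun j _ => ?_
  rw [Fin.val_succ, pow_succ]
  ring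

noncomputable def snocEquiv (i : ℕ) : (Fq × (Fin i → Fq)) ≃ (Fin (i + 1) → Fq) :=
  { toFun := fun x => Fin.snoc x.2 x.1
    invFun := fun d => (d (Fin.last i), fun j => d j.castSucc)
    left_inv := fun x => by
      ext j
      · simp
      · simp
    right_inv := fun d => by
      funext j
      exact congrFun (Fin.snoc_init_self d) j }

lemma carE_succ (i : ℕ) (u : Polynomial Fq) :
    carE Fq (i + 1) u =
      (carE Fq i u) ^ Fintype.card Fq -
        (carE Fq i (X ^ i)) ^ (Fintype.card Fq - 1) * carE Fq i u := by
  classical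
  rw [carE_eq]
  have h1 : ∏ d : Fin (i+1) → Fq, (u - phi (i+1) d) =
      ∏ x : Fq × (Fin i → Fq), (u - phi (i+1) (Fin.snoc x.2 x.1)) :=
    (Fintype.prod_equiv (snocEquiv i) _ _ fun x => rfl).symm
  rw [h1, Fintype.prod_prod_type
    (f := fun x : Fq × (Fin i → Fq) => u - phi (i+1) (Fin.snoc x.2 x.1))]
  have h2 : ∀ a : Fq, ∏ cc : Fin i → Fq, (u - phi (i+1) (Fin.snoc cc a)) =
      carE Fq i u - C a * carE Fq i (X ^ i) := by
    intro a
    have : ∀ cc : Fin i → Fq,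
        u - phi (i+1) (Fin.snoc cc a) = (u - C a * X ^ i) - phi i cc := by
      intro cc
      rw [phi_succ]
      simp only [Fin.snoc_castSucc, Fin.snoc_last]
      ring
    rw [Finset.prod_congr rfl fun cc _ => this cc, ← carE_eq, carE_sub_C_mul]
  rw [Finset.prod_congr rfl fun a _ => h2 a]
  exact prod_linear _ _

end CarlitzAux

namespace CarlitzAux

variable {Fq : Type} [Field Fq] [Fintype Fq]

lemma card_eq_char_pow : ∃ f : ℕ, (ringChar Fq).Prime ∧ Fintype.card Fq = ringChar Fq ^ f := by
  haveI := ringChar.charP Fq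
  obtain ⟨n, hp, h⟩ := FiniteField.card Fq (ringChar Fq)
  exact ⟨(n : ℕ), hp, h⟩

section charp

variable {p f : ℕ} [Fact p.Prime]

lemma add_pow_q {A : Type} [CommRing A] [CharP A p] (hcard : Fintype.card Fq = p ^ f)
    (m : ℕ) (x y : A) :
    (x + y) ^ Fintype.card Fq ^ m = x ^ Fintype.card Fq ^ m + y ^ Fintype.card Fq ^ m := by
  rw [hcard, ← pow_mul]
  exact add_pow_char_pow x y p (f * m)

lemma sub_pow_q {A : Type} [CommRing A] [CharP A p] (hcard : Fintype.card Fq = p ^ f)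
    (m : ℕ) (x y : A) :
    (x - y) ^ Fintype.card Fq ^ m = x ^ Fintype.card Fq ^ m - y ^ Fintype.card Fq ^ m := by
  rw [hcard, ← pow_mul]
  exact sub_pow_char_pow (p := p) x y (f * m)

lemma sum_pow_q {A : Type} [CommRing A] [CharP A p] (hcard : Fintype.card Fq = p ^ f)
    (m : ℕ) {ι : Type} (s : Finset ι) (g : ι → A) :
    (∑ j ∈ s, g j) ^ Fintype.card Fq ^ m = ∑ j ∈ s, (g j) ^ Fintype.card Fq ^ m := by
  classical
  induction s using Finset.induction_on with
  | empty =>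
    simp only [Finset.sum_empty]
    exact zero_pow (by positivity)
  | insert _ _ hx ih =>
    rw [Finset.sum_insert hx, Finset.sum_insert hx, add_pow_q (Fq := Fq) hcard, ih]

end charp

lemma carBr_succ_ne_zero (j : ℕ) : carBr Fq (Fintype.card Fq) (j + 1) ≠ 0 := by
  rw [carBr]
  exact FiniteField.X_pow_card_pow_sub_X_ne_zero Fq (Nat.succ_ne_zero j) Fintype.one_lt_card

lemma carD_succ (i : ℕ) :
    carD Fq (Fintype.card Fq) (i + 1) =
      carBr Fq (Fintype.card Fq) (i + 1) * carD Fq (Fintype.card Fq) i ^ Fintype.card Fq := rfl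

lemma carD_ne_zero : ∀ i : ℕ, carD Fq (Fintype.card Fq) i ≠ 0
  | 0 => one_ne_zero
  | i + 1 => mul_ne_zero (carBr_succ_ne_zero i) (pow_ne_zero _ (carD_ne_zero i))

lemma carE_zero_idx (s : Polynomial Fq) : carE Fq 0 s = s := by
  rw [carE_eq]
  rw [Fintype.prod_unique (fun c : Fin 0 → Fq => s - phi 0 c)]
  simp [phi]

/-- The main mutual induction: `e_i(X^i) = D_i` and `e_i(X^(i+1)) = D_i * (X^(q^0)+...+X^(q^i))`. -/
lemma carE_AB (i : ℕ) :
    carE Fq i (X ^ i) = carD Fq (Fintype.card Fq) i ∧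
    carE Fq i (X ^ (i + 1)) =
      carD Fq (Fintype.card Fq) i * ∑ j ∈ Finset.range (i + 1), X ^ Fintype.card Fq ^ j := by
  classical
  obtain ⟨f, hp, hcard⟩ := card_eq_char_pow (Fq := Fq)
  haveI : Fact (ringChar Fq).Prime := ⟨hp⟩
  induction i with
  | zero =>
    constructor
    · rw [pow_zero, carE_zero_idx]; rfl
    · rw [pow_one, carE_zero_idx]
      simp
      rfl
  | succ i ih =>
    obtain ⟨hA, hB⟩ := ih
    have hq1 : 1 ≤ Fintype.card Fq := Fintype.card_pos
    have hDpow : carD Fq (Fintype.card Fq) i ^ (Fintype.card Fq - 1) *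
        carD Fq (Fintype.card Fq) i = carD Fq (Fintype.card Fq) i ^ Fintype.card Fq := by
      rw [← pow_succ, Nat.sub_add_cancel hq1]
    have hSq : (∑ j ∈ Finset.range (i + 1), X ^ Fintype.card Fq ^ j : Polynomial Fq) ^
          Fintype.card Fq =
        ∑ j ∈ Finset.range (i + 1), X ^ Fintype.card Fq ^ (j + 1) := by
      have h0 := sum_pow_q (Fq := Fq) hcard 1 (Finset.range (i + 1))
        (fun j => (X : Polynomial Fq) ^ Fintype.card Fq ^ j)
      rw [pow_one] at h0
      rw [h0]
      refine Finset.sum_congr rfl fun j _ => ?_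
      rw [← pow_mul, ← pow_succ]
    have htel : (∑ j ∈ Finset.range (i + 1), X ^ Fintype.card Fq ^ (j + 1) : Polynomial Fq) -
        ∑ j ∈ Finset.range (i + 1), X ^ Fintype.card Fq ^ j =
        X ^ Fintype.card Fq ^ (i + 1) - X ^ Fintype.card Fq ^ 0 := by
      have e1 := Finset.sum_range_succ' (fun j => (X : Polynomial Fq) ^ Fintype.card Fq ^ j) (i + 1)
      have e2 := Finset.sum_range_succ (fun j => (X : Polynomial Fq) ^ Fintype.card Fq ^ j) (i + 1)
      linear_combination e2 - e1
    have hA1 : carE Fq (i + 1) (X ^ (i + 1)) = carD Fq (Fintype.card Fq) (i + 1) := by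
      rw [carE_succ, hB, hA, mul_pow, hSq]
      calc carD Fq (Fintype.card Fq) i ^ Fintype.card Fq *
            (∑ j ∈ Finset.range (i + 1), X ^ Fintype.card Fq ^ (j + 1)) -
            carD Fq (Fintype.card Fq) i ^ (Fintype.card Fq - 1) *
            (carD Fq (Fintype.card Fq) i * ∑ j ∈ Finset.range (i + 1), X ^ Fintype.card Fq ^ j)
          = carD Fq (Fintype.card Fq) i ^ Fintype.card Fq *
              ((∑ j ∈ Finset.range (i + 1), X ^ Fintype.card Fq ^ (j + 1)) -
              ∑ j ∈ Finset.range (i + 1), X ^ Fintype.card Fq ^ j) := by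
            rw [← mul_assoc, hDpow]; ring
        _ = carD Fq (Fintype.card Fq) i ^ Fintype.card Fq *
              (X ^ Fintype.card Fq ^ (i + 1) - X ^ Fintype.card Fq ^ 0) := by rw [htel]
        _ = carD Fq (Fintype.card Fq) (i + 1) := by
            rw [carD_succ, carBr, pow_zero, pow_one]; ring
    -- the Carlitz twist relation e_{i+1}(X·u) = X·e_{i+1}(u) + [i+1]·e_i(u)^q
    have hR : ∀ u : Polynomial Fq, carE Fq (i + 1) (X * u) =
        X * carE Fq (i + 1) u +
          carBr Fq (Fintype.card Fq) (i + 1) * (carE Fq i u) ^ Fintype.card Fq := by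
      intro u
      have hfne : ∀ c : Fin (i + 1) → Fq,
          (C X * X - C (phi (i + 1) c) : Polynomial (Polynomial Fq)) ≠ 0 := by
        intro c h
        have h1 : (C X * X - C (phi (i + 1) c) : Polynomial (Polynomial Fq)).natDegree = 1 := by
          rw [sub_eq_add_neg, ← map_neg, natDegree_linear X_ne_zero]
        rw [h, natDegree_zero] at h1
        exact one_ne_zero h1.symm
      have hfdeg : ∀ c : Fin (i + 1) → Fq,
          (C X * X - C (phi (i + 1) c) : Polynomial (Polynomial Fq)).natDegree = 1 := by
        intro c
        rw [sub_eq_add_neg, ← map_neg, natDegree_linear X_ne_zero]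
      have hflead : ∀ c : Fin (i + 1) → Fq,
          (C X * X - C (phi (i + 1) c) : Polynomial (Polynomial Fq)).leadingCoeff = X := by
        intro c
        rw [sub_eq_add_neg, ← map_neg, leadingCoeff_linear X_ne_zero]
      set N := Fintype.card Fq ^ (i + 1) with hN
      set g1 : Polynomial (Polynomial Fq) :=
        ∏ c : Fin (i + 1) → Fq, (C X * X - C (phi (i + 1) c)) with hg1
      have hg1nd : g1.natDegree = N := by
        rw [hg1, natDegree_prod _ _ fun c _ => hfne c,
          Finset.sum_congr rfl fun c (_ : c ∈ Finset.univ) => hfdeg c, Finset.sum_const,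
          card_univ, card_fun_fin, smul_eq_mul, mul_one]
      have hg1lead : g1.coeff N = X ^ N := by
        have h2 : g1.leadingCoeff = ∏ c : Fin (i+1) → Fq,
            (C X * X - C (phi (i+1) c)).leadingCoeff := by
          rw [hg1]; exact leadingCoeff_prod _ _
        rw [leadingCoeff, hg1nd] at h2
        rw [h2, Finset.prod_congr rfl fun c (_ : c ∈ Finset.univ) => hflead c,
          Finset.prod_const, card_univ, card_fun_fin]
      have hg1eval : ∀ v : Polynomial Fq, g1.eval v = carE Fq (i + 1) (X * v) := by
        intro v
        rw [hg1, eval_prod, carE_eq]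
        simp
      set g : Polynomial (Polynomial Fq) :=
        g1 - C X * Fpoly (i + 1) -
          C (carBr Fq (Fintype.card Fq) (i + 1)) * (Fpoly i) ^ Fintype.card Fq with hg
      have hFnd : (Fpoly (Fq := Fq) (i + 1)).natDegree = N := Fpoly_natDegree (i + 1)
      have hFind : ((Fpoly (Fq := Fq) i) ^ Fintype.card Fq).natDegree = N := by
        rw [natDegree_pow, Fpoly_natDegree, hN, pow_succ, mul_comm]
      have hdeg : g.natDegree < N := by
        have h1 : g.natDegree ≤ N := by
          refine le_trans (natDegree_sub_le _ _) (max_le (le_trans (natDegree_sub_le _ _)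
            (max_le ?_ ?_)) ?_)
          · rw [hg1nd]
          · exact le_trans natDegree_mul_le (by rw [natDegree_C, hFnd, zero_add])
          · exact le_trans natDegree_mul_le (by rw [natDegree_C, hFind, zero_add])
        rcases lt_or_eq_of_le h1 with h | h
        · exact h
        · exfalso
          have hco : g.coeff N = 0 := by
            rw [hg]
            simp only [coeff_sub, coeff_C_mul]
            rw [hg1lead]
            have c1 : (Fpoly (Fq := Fq) (i+1)).coeff N = 1 := by
              rw [← hFnd]; exact (Fpoly_monic (i+1)).coeff_natDegree
            have c2 : ((Fpoly (Fq := Fq) i) ^ Fintype.card Fq).coeff N = 1 := by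
              rw [← hFind]; exact ((Fpoly_monic i).pow (Fintype.card Fq)).coeff_natDegree
            rw [c1, c2, carBr]
            ring
          have h0 : g.leadingCoeff = 0 := by rw [leadingCoeff, h, hco]
          rw [leadingCoeff_eq_zero] at h0
          rw [h0, natDegree_zero] at h
          exact absurd h.symm (by positivity)
      have hzero : g = 0 := by
        refine poly_eq_zero (i + 1) g hdeg fun c => ?_
        set c0 : Fin i → Fq := fun j => c j.castSucc with hc0
        set a : Fq := c (Fin.last i) with ha
        have hphi : phi (i + 1) c = phi i c0 + C a * X ^ i := phi_succ i c
        have hEi : carE Fq i (phi (i + 1) c) = C a * carD Fq (Fintype.card Fq) i := by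
          rw [hphi, carE_add, carE_root, carE_C_mul, hA, zero_add]
        have hXphi : X * phi (i + 1) c = phi (i + 1) (Fin.cons 0 c0) + C a * X ^ (i + 1) := by
          rw [hphi, phi_cons_zero]
          ring
        have hEX : carE Fq (i + 1) (X * phi (i + 1) c) =
            C a * carD Fq (Fintype.card Fq) (i + 1) := by
          rw [hXphi, carE_add_phi, carE_C_mul, hA1]
        rw [hg]
        simp only [eval_sub, eval_mul, eval_C, eval_pow, Fpoly_eval]
        rw [hg1eval, hEX, carE_root, hEi]
        rw [mul_pow, ← C_pow, FiniteField.pow_card, carD_succ]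
        ring
      have hh := congrArg (Polynomial.eval u) hzero
      rw [hg] at hh
      simp only [eval_sub, eval_mul, eval_C, eval_pow, Fpoly_eval, eval_zero] at hh
      rw [hg1eval] at hh
      rw [sub_sub, sub_eq_zero] at hh
      rw [hh]
    refine ⟨hA1, ?_⟩
    have hx2 : (X : Polynomial Fq) ^ (i + 1 + 1) = X * X ^ (i + 1) := by
      rw [pow_succ]; ring
    rw [hx2, hR, hA1, hB, mul_pow, hSq]
    rw [Finset.sum_range_succ' (fun j => (X : Polynomial Fq) ^ Fintype.card Fq ^ j) (i + 1)]
    rw [carD_succ, pow_zero, pow_one]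
    ring

end CarlitzAux

namespace CarlitzAux

variable {Fq : Type} [Field Fq] [Fintype Fq]

lemma AL_injective :
    Function.Injective (algebraMap (Polynomial Fq) (RatFunc Fq)) :=
  IsFractionRing.injective (Polynomial Fq) (RatFunc Fq)

lemma deltaK_ne_zero (n : ℕ) :
    algebraMap (Polynomial Fq) (RatFunc Fq) (carD Fq (Fintype.card Fq) n) ≠ 0 := by
  intro h
  exact carD_ne_zero n (AL_injective (by rw [h, map_zero]))

lemma betaK_ne_zero (n : ℕ) :
    algebraMap (Polynomial Fq) (RatFunc Fq) (carBr Fq (Fintype.card Fq) (n + 1)) ≠ 0 := by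
  intro h
  exact carBr_succ_ne_zero n (AL_injective (by rw [h, map_zero]))

lemma deltaK_succ (n : ℕ) :
    algebraMap (Polynomial Fq) (RatFunc Fq) (carD Fq (Fintype.card Fq) (n + 1)) =
      algebraMap (Polynomial Fq) (RatFunc Fq) (carBr Fq (Fintype.card Fq) (n + 1)) *
        algebraMap (Polynomial Fq) (RatFunc Fq) (carD Fq (Fintype.card Fq) n) ^
          Fintype.card Fq := by
  rw [carD_succ, map_mul, map_pow]

/-- bracket addition `[m] + [n]^(q^m) = [n+m]`. -/
lemma carBr_add (m n : ℕ) :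
    carBr Fq (Fintype.card Fq) m +
      (carBr Fq (Fintype.card Fq) n) ^ (Fintype.card Fq ^ m) =
      carBr Fq (Fintype.card Fq) (n + m) := by
  obtain ⟨f, hp, hcard⟩ := card_eq_char_pow (Fq := Fq)
  haveI : Fact (ringChar Fq).Prime := ⟨hp⟩
  rw [carBr, carBr, carBr]
  rw [sub_pow_q (Fq := Fq) hcard m]
  rw [← pow_mul, ← pow_add]
  ring

lemma betaK_add (m n : ℕ) :
    algebraMap (Polynomial Fq) (RatFunc Fq) (carBr Fq (Fintype.card Fq) m) +
      (algebraMap (Polynomial Fq) (RatFunc Fq) (carBr Fq (Fintype.card Fq) n)) ^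
        (Fintype.card Fq ^ m) =
      algebraMap (Polynomial Fq) (RatFunc Fq) (carBr Fq (Fintype.card Fq) (n + m)) := by
  rw [← map_pow, ← map_add, carBr_add]

lemma binomK_eq (k n : ℕ) (h : n ≤ k) :
    binomK Fq (Fintype.card Fq) k (n : ℤ) =
      algebraMap (Polynomial Fq) (RatFunc Fq) (carD Fq (Fintype.card Fq) k) /
        (algebraMap (Polynomial Fq) (RatFunc Fq) (carD Fq (Fintype.card Fq) n) *
          algebraMap (Polynomial Fq) (RatFunc Fq) (carD Fq (Fintype.card Fq) (k - n)) ^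
            Fintype.card Fq ^ n) := by
  rw [binomK, if_pos ⟨Int.natCast_nonneg n, by exact_mod_cast h⟩]
  simp

lemma binomK_out (k n : ℕ) (h : k < n) : binomK Fq (Fintype.card Fq) k (n : ℤ) = 0 := by
  rw [binomK, if_neg]
  rintro ⟨-, h2⟩
  have : (n : ℤ) ≤ (k : ℤ) := h2
  have := Int.ofNat_le.mp this
  omega

lemma binomK_zero_right (k : ℕ) : binomK Fq (Fintype.card Fq) k (0 : ℤ) = 1 := by
  have h := binomK_eq (Fq := Fq) k 0 (Nat.zero_le k)
  push_cast at h
  rw [h]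
  show _ / (algebraMap (Polynomial Fq) (RatFunc Fq) 1 * _) = 1
  rw [map_one, one_mul, pow_zero, pow_one, Nat.sub_zero, div_self (deltaK_ne_zero k)]

lemma binomK_self (k : ℕ) : binomK Fq (Fintype.card Fq) k (k : ℤ) = 1 := by
  rw [binomK_eq k k le_rfl, Nat.sub_self]
  show _ / (_ * algebraMap (Polynomial Fq) (RatFunc Fq) 1 ^ _) = 1
  rw [map_one, one_pow, mul_one, div_self (deltaK_ne_zero k)]

end CarlitzAux

namespace CarlitzAux

variable {Fq : Type} [Field Fq] [Fintype Fq]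

lemma pow_pred_mul {K : Type} [Field K] {Q : ℕ} (hQ : 1 ≤ Q) (w : K) :
    w ^ (Q - 1) * w = w ^ Q := by
  rw [← pow_succ, Nat.sub_add_cancel hQ]

lemma pascal_core {K : Type} [Field K] (x y d a b : K) (Q M M' : ℕ) (hQ : 1 ≤ Q)
    (hM : M = M' * Q) (hx : x ≠ 0) (hy : y ≠ 0) (ha : a ≠ 0) (hb : b ≠ 0) :
    ((a + b ^ M) * d ^ Q) / ((a * x ^ Q) * (b * y ^ Q) ^ M) =
      (d / (x * (b * y ^ Q) ^ M')) ^ Q +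
        (d / ((a * x ^ Q) * y ^ M)) ^ Q * (a * x ^ Q) ^ (Q - 1) := by
  have hw : a * x ^ Q ≠ 0 := mul_ne_zero ha (pow_ne_zero _ hx)
  have t1 : (d / (x * (b * y ^ Q) ^ M')) ^ Q = d ^ Q / (x ^ Q * (b * y ^ Q) ^ M) := by
    rw [div_pow, mul_pow, ← pow_mul, ← hM]
  have t2 : (d / ((a * x ^ Q) * y ^ M)) ^ Q * (a * x ^ Q) ^ (Q - 1) =
      d ^ Q / ((a * x ^ Q) * (y ^ M) ^ Q) := by
    rw [div_pow, mul_pow (a * x ^ Q), ← pow_pred_mul hQ (a * x ^ Q)]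
    field_simp
  rw [t1, t2]
  have hby : b * y ^ Q ≠ 0 := mul_ne_zero hb (pow_ne_zero _ hy)
  have ne1 : x ^ Q * (b * y ^ Q) ^ M ≠ 0 := mul_ne_zero (pow_ne_zero _ hx) (pow_ne_zero _ hby)
  have ne2 : a * x ^ Q * (y ^ M) ^ Q ≠ 0 := mul_ne_zero hw (pow_ne_zero _ (pow_ne_zero _ hy))
  have ne3 : a * x ^ Q * (b * y ^ Q) ^ M ≠ 0 := mul_ne_zero hw (pow_ne_zero _ hby)
  rw [div_add_div _ _ ne1 ne2, div_eq_div_iff ne3 (mul_ne_zero ne1 ne2)]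
  ring

lemma binomK_pascal (i n : ℕ) (h : n ≤ i) :
    binomK Fq (Fintype.card Fq) (i + 1) ((n + 1 : ℕ) : ℤ) =
      (binomK Fq (Fintype.card Fq) i (n : ℤ)) ^ Fintype.card Fq +
        (binomK Fq (Fintype.card Fq) i ((n + 1 : ℕ) : ℤ)) ^ Fintype.card Fq *
          (algebraMap (Polynomial Fq) (RatFunc Fq) (carD Fq (Fintype.card Fq) (n + 1))) ^
            (Fintype.card Fq - 1) := by
  have hq1 : 1 ≤ Fintype.card Fq := Fintype.card_pos
  rcases eq_or_lt_of_le h with rfl | hlt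
  · rw [binomK_self, binomK_self, binomK_out n (n + 1) (Nat.lt_succ_self n), one_pow,
      zero_pow (by omega), zero_mul, add_zero]
  · -- n < i
    set AL := algebraMap (Polynomial Fq) (RatFunc Fq) with hAL
    set x := AL (carD Fq (Fintype.card Fq) n) with hxd
    set y := AL (carD Fq (Fintype.card Fq) (i - n - 1)) with hyd
    set d := AL (carD Fq (Fintype.card Fq) i) with hdd
    set a := AL (carBr Fq (Fintype.card Fq) (n + 1)) with had
    set b := AL (carBr Fq (Fintype.card Fq) (i - n)) with hbd
    have h1 : AL (carD Fq (Fintype.card Fq) (n + 1)) = a * x ^ Fintype.card Fq :=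
      deltaK_succ n
    have h2 : AL (carD Fq (Fintype.card Fq) (i - n)) = b * y ^ Fintype.card Fq := by
      have e := deltaK_succ (Fq := Fq) (i - n - 1)
      rw [show i - n - 1 + 1 = i - n from by omega] at e
      exact e
    have h3 : AL (carBr Fq (Fintype.card Fq) (i + 1)) =
        a + b ^ Fintype.card Fq ^ (n + 1) := by
      have e := betaK_add (Fq := Fq) (n + 1) (i - n)
      rw [show i - n + (n + 1) = i + 1 from by omega] at e
      exact e.symm
    have h4 : AL (carD Fq (Fintype.card Fq) (i + 1)) =
        (a + b ^ Fintype.card Fq ^ (n + 1)) * d ^ Fintype.card Fq := by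
      rw [deltaK_succ i, h3]
    rw [binomK_eq (i + 1) (n + 1) (by omega), binomK_eq i n (by omega),
      binomK_eq i (n + 1) (by omega)]
    rw [show i + 1 - (n + 1) = i - n from by omega, show i - (n + 1) = i - n - 1 from by omega]
    have hbne : b ≠ 0 := by
      rw [hbd, show i - n = (i - n - 1) + 1 from by omega]
      exact betaK_ne_zero _
    rw [← hAL, ← hxd, ← hyd, ← hdd]
    rw [h1, h2, h4]
    exact pascal_core x y d a b (Fintype.card Fq) (Fintype.card Fq ^ (n + 1))
      (Fintype.card Fq ^ n) hq1 (pow_succ _ _) (deltaK_ne_zero n) (deltaK_ne_zero _)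
      (betaK_ne_zero n) hbne

lemma binomK_P2 (i n : ℕ) (h : n ≤ i) :
    (binomK Fq (Fintype.card Fq) i (n : ℤ)) ^ Fintype.card Fq *
        (algebraMap (Polynomial Fq) (RatFunc Fq) (carD Fq (Fintype.card Fq) n)) ^
          (Fintype.card Fq - 1) *
        ((algebraMap (Polynomial Fq) (RatFunc Fq) (carD Fq (Fintype.card Fq) (i - n))) ^
          (Fintype.card Fq - 1)) ^ Fintype.card Fq ^ n =
      (algebraMap (Polynomial Fq) (RatFunc Fq) (carD Fq (Fintype.card Fq) i)) ^
          (Fintype.card Fq - 1) * binomK Fq (Fintype.card Fq) i (n : ℤ) := by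
  have hq1 : 1 ≤ Fintype.card Fq := Fintype.card_pos
  set AL := algebraMap (Polynomial Fq) (RatFunc Fq) with hAL
  set x := AL (carD Fq (Fintype.card Fq) n) with hxd
  set u := AL (carD Fq (Fintype.card Fq) (i - n)) with hud
  set d := AL (carD Fq (Fintype.card Fq) i) with hdd
  have hx : x ≠ 0 := deltaK_ne_zero n
  have hu : u ≠ 0 := deltaK_ne_zero (i - n)
  have hd : d ≠ 0 := deltaK_ne_zero i
  rw [binomK_eq i n h, ← hAL, ← hxd, ← hud, ← hdd]
  set z := u ^ Fintype.card Fq ^ n with hzd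
  have hz : z ≠ 0 := pow_ne_zero _ hu
  have e1 : (u ^ (Fintype.card Fq - 1)) ^ Fintype.card Fq ^ n = z ^ (Fintype.card Fq - 1) := by
    rw [hzd, ← pow_mul, ← pow_mul, Nat.mul_comm]
  rw [e1, div_pow, mul_pow x z, ← pow_pred_mul hq1 x, ← pow_pred_mul hq1 z,
    ← pow_pred_mul hq1 d]
  field_simp

end CarlitzAux

namespace CarlitzAux

variable {Fq : Type} [Field Fq] [Fintype Fq]

lemma carE_rec_K (n : ℕ) (u : Polynomial Fq) :
    algebraMap (Polynomial Fq) (RatFunc Fq) (carE Fq (n + 1) u) =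
      algebraMap (Polynomial Fq) (RatFunc Fq) (carE Fq n u) ^ Fintype.card Fq -
        algebraMap (Polynomial Fq) (RatFunc Fq) (carD Fq (Fintype.card Fq) n) ^
            (Fintype.card Fq - 1) *
          algebraMap (Polynomial Fq) (RatFunc Fq) (carE Fq n u) := by
  have h := carE_succ (Fq := Fq) n u
  rw [(carE_AB n).1] at h
  rw [h, map_sub, map_mul, map_pow, map_pow]

noncomputable def Uu (s t : Polynomial Fq) (i n : ℕ) : RatFunc Fq :=
  binomK Fq (Fintype.card Fq) i (n : ℤ) *
    algebraMap (Polynomial Fq) (RatFunc Fq) (carE Fq n t) *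
    algebraMap (Polynomial Fq) (RatFunc Fq) (carE Fq (i - n) s) ^ Fintype.card Fq ^ n

noncomputable def Pp (s t : Polynomial Fq) (i n : ℕ) : RatFunc Fq :=
  binomK Fq (Fintype.card Fq) i (n : ℤ) ^ Fintype.card Fq *
    algebraMap (Polynomial Fq) (RatFunc Fq) (carE Fq (n + 1) t) *
    algebraMap (Polynomial Fq) (RatFunc Fq) (carE Fq (i - n) s) ^ Fintype.card Fq ^ (n + 1)

noncomputable def Qq (s t : Polynomial Fq) (i n : ℕ) : RatFunc Fq :=
  binomK Fq (Fintype.card Fq) i (n : ℤ) ^ Fintype.card Fq *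
    algebraMap (Polynomial Fq) (RatFunc Fq) (carD Fq (Fintype.card Fq) n) ^
      (Fintype.card Fq - 1) *
    algebraMap (Polynomial Fq) (RatFunc Fq) (carE Fq n t) *
    algebraMap (Polynomial Fq) (RatFunc Fq) (carE Fq (i + 1 - n) s) ^ Fintype.card Fq ^ n

lemma main_id (i : ℕ) (s t : Polynomial Fq) :
    algebraMap (Polynomial Fq) (RatFunc Fq) (carE Fq i (s * t)) =
      ∑ n ∈ Finset.range (i + 1), Uu s t i n := by
  classical
  obtain ⟨f, hp, hcard⟩ := card_eq_char_pow (Fq := Fq)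
  haveI : Fact (ringChar Fq).Prime := ⟨hp⟩
  haveI := ringChar.charP Fq
  haveI : CharP (RatFunc Fq) (ringChar Fq) :=
    charP_of_injective_algebraMap (AL_injective (Fq := Fq)) _
  induction i with
  | zero =>
    rw [Finset.sum_range_one]
    rw [Uu]
    rw [Nat.cast_zero, binomK_zero_right, one_mul, Nat.sub_zero, pow_zero, pow_one,
      carE_zero_idx, carE_zero_idx, carE_zero_idx, map_mul]
    ring
  | succ i IH =>
    rw [carE_rec_K i (s * t), IH]
    have hq0 : Fintype.card Fq ≠ 0 := Fintype.card_pos.ne'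
    have hsum1 : (∑ n ∈ Finset.range (i + 1), Uu s t i n) ^ Fintype.card Fq =
        ∑ n ∈ Finset.range (i + 1), (Uu s t i n) ^ Fintype.card Fq := by
      have h := sum_pow_q (Fq := Fq) hcard 1 (Finset.range (i + 1)) (Uu s t i)
      rwa [pow_one] at h
    have hperterm : ∀ n ∈ Finset.range (i + 1),
        (Uu s t i n) ^ Fintype.card Fq -
          algebraMap (Polynomial Fq) (RatFunc Fq) (carD Fq (Fintype.card Fq) i) ^
            (Fintype.card Fq - 1) * Uu s t i n = Pp s t i n + Qq s t i n := by
      intro n hn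
      have hle : n ≤ i := by
        have := Finset.mem_range.mp hn; omega
      have hT := carE_rec_K (Fq := Fq) n t
      have hA := carE_rec_K (Fq := Fq) (i - n) s
      rw [show i - n + 1 = i + 1 - n from by omega] at hA
      -- express the q-th powers
      have hTq : algebraMap (Polynomial Fq) (RatFunc Fq) (carE Fq n t) ^ Fintype.card Fq =
          algebraMap (Polynomial Fq) (RatFunc Fq) (carE Fq (n + 1) t) +
            algebraMap (Polynomial Fq) (RatFunc Fq) (carD Fq (Fintype.card Fq) n) ^
              (Fintype.card Fq - 1) *
              algebraMap (Polynomial Fq) (RatFunc Fq) (carE Fq n t) := by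
        rw [hT]; ring
      have hAq : algebraMap (Polynomial Fq) (RatFunc Fq) (carE Fq (i - n) s) ^
            Fintype.card Fq =
          algebraMap (Polynomial Fq) (RatFunc Fq) (carE Fq (i + 1 - n) s) +
            algebraMap (Polynomial Fq) (RatFunc Fq) (carD Fq (Fintype.card Fq) (i - n)) ^
              (Fintype.card Fq - 1) *
              algebraMap (Polynomial Fq) (RatFunc Fq) (carE Fq (i - n) s) := by
        rw [hA]; ring
      have hA2 : (algebraMap (Polynomial Fq) (RatFunc Fq) (carE Fq (i - n) s) ^
            Fintype.card Fq ^ n) ^ Fintype.card Fq =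
          algebraMap (Polynomial Fq) (RatFunc Fq) (carE Fq (i + 1 - n) s) ^
              Fintype.card Fq ^ n +
            (algebraMap (Polynomial Fq) (RatFunc Fq) (carD Fq (Fintype.card Fq) (i - n)) ^
                (Fintype.card Fq - 1)) ^ Fintype.card Fq ^ n *
              algebraMap (Polynomial Fq) (RatFunc Fq) (carE Fq (i - n) s) ^
                Fintype.card Fq ^ n := by
        rw [← pow_mul, Nat.mul_comm, pow_mul, hAq, add_pow_q (Fq := Fq) hcard n, mul_pow]
      have hA3 : algebraMap (Polynomial Fq) (RatFunc Fq) (carE Fq (i - n) s) ^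
            Fintype.card Fq ^ (n + 1) =
          algebraMap (Polynomial Fq) (RatFunc Fq) (carE Fq (i + 1 - n) s) ^
              Fintype.card Fq ^ n +
            (algebraMap (Polynomial Fq) (RatFunc Fq) (carD Fq (Fintype.card Fq) (i - n)) ^
                (Fintype.card Fq - 1)) ^ Fintype.card Fq ^ n *
              algebraMap (Polynomial Fq) (RatFunc Fq) (carE Fq (i - n) s) ^
                Fintype.card Fq ^ n := by
        rw [pow_succ, pow_mul, hA2]
      have hP2 := binomK_P2 (Fq := Fq) i n hle
      rw [Uu, Pp, Qq, mul_pow, mul_pow, hTq, hA2, hA3]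
      linear_combination (algebraMap (Polynomial Fq) (RatFunc Fq) (carE Fq n t) *
        algebraMap (Polynomial Fq) (RatFunc Fq) (carE Fq (i - n) s) ^
          Fintype.card Fq ^ n) * hP2
    rw [hsum1, Finset.mul_sum, ← Finset.sum_sub_distrib,
      Finset.sum_congr rfl hperterm, Finset.sum_add_distrib]
    rw [Finset.sum_range_succ' (Uu s t (i + 1)) (i + 1)]
    have hU : ∀ n ∈ Finset.range (i + 1), Uu s t (i + 1) (n + 1) =
        Pp s t i n + Qq s t i (n + 1) := by
      intro n hn
      have hle : n ≤ i := by
        have := Finset.mem_range.mp hn; omega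
      rw [Uu, Pp, Qq]
      rw [show i + 1 - (n + 1) = i - n from by omega]
      rw [binomK_pascal i n hle]
      ring
    have hU0 : Uu s t (i + 1) 0 = Qq s t i 0 := by
      rw [Uu, Qq, Nat.cast_zero, binomK_zero_right, binomK_zero_right]
      rw [show carD Fq (Fintype.card Fq) 0 = 1 from rfl, map_one, one_pow, one_pow, Nat.sub_zero]
      ring
    have hQtop : Qq s t i (i + 1) = 0 := by
      rw [Qq, binomK_out i (i + 1) (Nat.lt_succ_self i), zero_pow hq0, zero_mul, zero_mul,
        zero_mul]
    rw [Finset.sum_congr rfl hU, Finset.sum_add_distrib, hU0, add_assoc]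
    congr 1
    rw [← Finset.sum_range_succ' (Qq s t i) (i + 1),
      Finset.sum_range_succ (Qq s t i) (i + 1), hQtop, add_zero]

end CarlitzAux


/-- The `K`-binomial identity for the Carlitz polynomials:
`e_i(st) = Σ_{n=0}^{i} binom(i,n)_K · e_n(t) · (e_{i-n}(s))^{q^n}` for all `s,t ∈ F_q[x]`
(stated in `F_q(x)` since the `K`-binomial coefficients are a priori rational functions). -/
theorem carlitz_K_binomial_identity (Fq : Type) [Field Fq] [Fintype Fq]
    (q : ℕ) (hq : q = Fintype.card Fq) (i : ℕ) (s t : Polynomial Fq) :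
    algebraMap (Polynomial Fq) (RatFunc Fq) (carE Fq i (s * t)) =
      ∑ n ∈ Finset.range (i + 1),
        binomK Fq q i (n : ℤ) *
          algebraMap (Polynomial Fq) (RatFunc Fq) (carE Fq n t) *
          algebraMap (Polynomial Fq) (RatFunc Fq) (carE Fq (i - n) s) ^ q ^ n := by
  subst hq
  rw [CarlitzAux.main_id (Fq := Fq) i s t]
  exact Finset.sum_congr rfl fun n _ => by rw [CarlitzAux.Uu]
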